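/- Let U be a conditionally complete lattice-ordered group satisfying the ascending chain condition on integral elements. Then U is commutative, U₊ is a free abelian monoid on its set of atoms, and U is the free abelian group on the same basis. Moreover, for a, b ∈ U₊, gcd(a,b) = a ∨ b and lcm(a,b) = a ∧ b. -/

import Mathlib

/-- An atom of the monoid of integral elements `U₊ = {x : x ≤ 1}` of an ordered group. -/
def IsIntegralAtom {U : Type*} [Group U] [PartialOrder U] (p : U) : Prop :=
  p ≤ 1 ∧ p ≠ 1 ∧ ∀ a b : U, a ≤ 1 → b ≤ 1 → p = a * b → a = 1 ∨ b = 1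

set_option linter.unusedSectionVars false
section Aux
variable {U : Type*} [Lattice U] [Group U]
    [CovariantClass U U (· * ·) (· ≤ ·)]
    [CovariantClass U U (Function.swap (· * ·)) (· ≤ ·)]

/-- divisibility in U₊ is order -/
lemma dvd_int {a d : U} (ha : a ≤ d) : ∃ c, c ≤ 1 ∧ a = d * c :=
  ⟨d⁻¹ * a, by simpa using mul_le_mul_right ha d⁻¹, by simp⟩

lemma int_of_dvd {a d c : U} (hc : c ≤ 1) (h : a = d * c) : a ≤ d := by
  subst h; simpa using mul_le_mul_right hc d

lemma atom_max {p : U} (hp : IsIntegralAtom p) {x : U} (hpx : p ≤ x) (hx : x ≤ 1) :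
    x = 1 ∨ x = p := by
  obtain ⟨hp1, hpne, hirr⟩ := hp
  rcases hirr x (x⁻¹ * p) hx (by simpa using mul_le_mul_right hpx x⁻¹) (by simp) with h | h
  · exact Or.inl h
  · right
    have := congrArg (x * ·) h
    simpa using this.symm

lemma atom_of_max {p : U} (hp1 : p ≤ 1) (hpne : p ≠ 1)
    (hmax : ∀ x, p ≤ x → x ≤ 1 → x = 1 ∨ x = p) : IsIntegralAtom p := by
  refine ⟨hp1, hpne, fun a b ha hb hab => ?_⟩
  have hpa : p ≤ a := int_of_dvd hb hab
  rcases hmax a hpa ha with h | h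
  · exact Or.inl h
  · right
    rw [h] at hab
    exact mul_left_cancel (a := p) (by simpa using hab.symm)

lemma exists_max (hacc : ∀ f : ℕ → U, (∀ n, f n ≤ 1) → Monotone f → ∃ N, ∀ n, N ≤ n → f n = f N)
    (S : Set U) (hne : S.Nonempty) (hS1 : ∀ x ∈ S, x ≤ 1) :
    ∃ m ∈ S, ∀ x ∈ S, m ≤ x → x = m := by
  by_contra h
  push_neg at h
  choose! next hnextS hnextle hnextne using h
  obtain ⟨x0, hx0⟩ := hne
  set f : ℕ → U := fun n => next^[n] x0 with hf
  have hstep : ∀ n, f n ∈ S ∧ f n ≤ f (n + 1) ∧ f n ≠ f (n + 1) := by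
    intro n
    induction n with
    | zero =>
      have h1 : f 1 = next (f 0) := by simp [hf]
      have h0 : f 0 = x0 := rfl
      exact ⟨by rwa [h0], by rw [h0, h1]; exact hnextle x0 hx0,
        by rw [h0, h1]; exact fun he => hnextne x0 hx0 he.symm⟩
    | succ n ih =>
      have hmem : f (n + 1) ∈ S := by
        have : f (n + 1) = next (f n) := Function.iterate_succ_apply' _ _ _
        rw [this]; exact hnextS _ ih.1
      have h2 : f (n + 2) = next (f (n + 1)) := Function.iterate_succ_apply' _ _ _
      exact ⟨hmem, by rw [h2]; exact hnextle _ hmem,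
        by rw [h2]; exact fun he => hnextne _ hmem he.symm⟩
  obtain ⟨N, hN⟩ := hacc f (fun n => hS1 _ (hstep n).1)
    (monotone_nat_of_le_succ fun n => (hstep n).2.1)
  exact (hstep N).2.2 ((hN (N + 1) (by omega)).trans (hN N le_rfl).symm).symm

lemma exists_atom_above
    (hacc : ∀ f : ℕ → U, (∀ n, f n ≤ 1) → Monotone f → ∃ N, ∀ n, N ≤ n → f n = f N)
    {a : U} (ha : a ≤ 1) (hane : a ≠ 1) : ∃ p, IsIntegralAtom p ∧ a ≤ p := by
  obtain ⟨m, ⟨ham, hm1, hmne⟩, hmax⟩ := exists_max hacc {x | a ≤ x ∧ x ≤ 1 ∧ x ≠ 1}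
    ⟨a, le_rfl, ha, hane⟩ (fun x hx => hx.2.1)
  refine ⟨m, atom_of_max hm1 hmne fun x hmx hx1 => ?_, ham⟩
  by_cases hx : x = 1
  · exact Or.inl hx
  · exact Or.inr (hmax x ⟨ham.trans hmx, hx1, hx⟩ hmx)

lemma exists_list_factorization
    (hacc : ∀ f : ℕ → U, (∀ n, f n ≤ 1) → Monotone f → ∃ N, ∀ n, N ≤ n → f n = f N)
    {a : U} (ha : a ≤ 1) :
    ∃ l : List U, (∀ p ∈ l, IsIntegralAtom p) ∧ a = l.prod := by
  by_contra hcon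
  have hne : a ∈ {x : U | x ≤ 1 ∧ ¬∃ l : List U, (∀ p ∈ l, IsIntegralAtom p) ∧ x = l.prod} :=
    ⟨ha, hcon⟩
  obtain ⟨m, ⟨hm1, hmS⟩, hmax⟩ := exists_max hacc _ ⟨a, hne⟩ (fun x hx => hx.1)
  have hmne : m ≠ 1 := by
    rintro rfl
    exact hmS ⟨[], by simp, by simp⟩
  obtain ⟨p, hp, hmp⟩ := exists_atom_above hacc hm1 hmne
  set c := p⁻¹ * m with hc
  have hc1 : c ≤ 1 := by simpa [hc] using mul_le_mul_right hmp p⁻¹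
  have hmc : m ≤ c := by
    have : (1 : U) ≤ p⁻¹ := one_le_inv'.2 hp.1
    simpa [hc] using mul_le_mul_left this m
  have hcne : c ≠ m := by
    intro h
    apply hp.2.1
    have : p * c = p * m := congrArg (p * ·) h
    have hpm : m = p * m := by simpa [hc] using this.symm
    exact mul_right_cancel (a := p) (b := m) (by simpa using hpm.symm)
  have hcS : ∃ l : List U, (∀ q ∈ l, IsIntegralAtom q) ∧ c = l.prod := by
    by_contra hcS
    exact hcne (hmax c ⟨hc1, hcS⟩ hmc)
  obtain ⟨l, hl, hcl⟩ := hcS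
  refine hmS ⟨p :: l, ?_, ?_⟩
  · intro q hq
    rcases List.mem_cons.1 hq with rfl | hq
    · exact hp
    · exact hl q hq
  · simp [← hcl, hc]



lemma comm_of_sup_eq_one {a b : U} (h : a ⊔ b = 1) : a * b = b * a := by
  have key : ∀ x y : U, x ⊔ y = 1 → x * y = y ⊓ x := by
    intro x y hxy
    have h1 : x * (x ⊔ y)⁻¹ * y = y ⊓ x := by
      rw [inv_sup, mul_inf, inf_mul]; simp
    rw [hxy] at h1; simpa using h1
  rw [key a b h, key b a (by rwa [sup_comm]), inf_comm]

lemma atoms_sup_eq_one {p q : U} (hp : IsIntegralAtom p) (hq : IsIntegralAtom q)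
    (hne : p ≠ q) : p ⊔ q = 1 := by
  rcases atom_max hp le_sup_left (sup_le hp.1 hq.1) with h | h
  · exact h
  · exfalso
    have hqp : q ≤ p := h ▸ le_sup_right
    rcases atom_max hq hqp hp.1 with h1 | h1
    · exact hp.2.1 h1
    · exact hne h1.symm.symm

lemma atoms_commute {p q : U} (hp : IsIntegralAtom p) (hq : IsIntegralAtom q) :
    Commute p q := by
  rcases eq_or_ne p q with rfl | hne
  · exact Commute.refl p
  · exact comm_of_sup_eq_one (atoms_sup_eq_one hp hq hne)

lemma commute_int
    (hacc : ∀ f : ℕ → U, (∀ n, f n ≤ 1) → Monotone f → ∃ N, ∀ n, N ≤ n → f n = f N)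
    {a b : U} (ha : a ≤ 1) (hb : b ≤ 1) : Commute a b := by
  obtain ⟨l, hl, rfl⟩ := exists_list_factorization hacc ha
  obtain ⟨m, hm, rfl⟩ := exists_list_factorization hacc hb
  exact Commute.list_prod_left l _ fun x hx =>
    Commute.list_prod_right m x fun y hy => atoms_commute (hl x hx) (hm y hy)

lemma pos_neg_decomp (a : U) : a = (a ⊓ 1) * (a⁻¹ ⊓ 1)⁻¹ := by
  have h1 : (a⁻¹ ⊓ 1)⁻¹ = a ⊔ 1 := by rw [inv_inf]; simp
  have h2 : (a ⊓ 1)⁻¹ * a = a ⊔ 1 := by rw [inv_inf]; rw [sup_mul]; simp [sup_comm]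
  rw [h1, ← h2, mul_inv_cancel_left]

lemma mul_comm_all
    (hacc : ∀ f : ℕ → U, (∀ n, f n ≤ 1) → Monotone f → ∃ N, ∀ n, N ≤ n → f n = f N)
    (a b : U) : a * b = b * a := by
  have C : ∀ x y : U, x ≤ 1 → y ≤ 1 → Commute x y := fun x y => commute_int hacc
  have ha := pos_neg_decomp a
  have hb := pos_neg_decomp b
  have hcomm : Commute ((a ⊓ 1) * (a⁻¹ ⊓ 1)⁻¹) ((b ⊓ 1) * (b⁻¹ ⊓ 1)⁻¹) := by
    have i1 : (a : U) ⊓ 1 ≤ 1 := inf_le_right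
    have i2 : (a⁻¹ : U) ⊓ 1 ≤ 1 := inf_le_right
    have i3 : (b : U) ⊓ 1 ≤ 1 := inf_le_right
    have i4 : (b⁻¹ : U) ⊓ 1 ≤ 1 := inf_le_right
    exact ((C _ _ i1 i3).mul_right ((C _ _ i1 i4).inv_right)).mul_left
      (((C _ _ i2 i3).inv_left).mul_right (((C _ _ i2 i4).inv_left).inv_right))
  calc a * b = (a ⊓ 1) * (a⁻¹ ⊓ 1)⁻¹ * ((b ⊓ 1) * (b⁻¹ ⊓ 1)⁻¹) := by rw [← ha, ← hb]
    _ = (b ⊓ 1) * (b⁻¹ ⊓ 1)⁻¹ * ((a ⊓ 1) * (a⁻¹ ⊓ 1)⁻¹) := hcomm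
    _ = b * a := by rw [← ha, ← hb]
end Aux

section Comm
variable {U : Type*} [Lattice U] [CommGroup U] [CovariantClass U U (· * ·) (· ≤ ·)]

lemma pow_le_one'' {a : U} (h : a ≤ 1) (n : ℕ) : a ^ n ≤ 1 :=
  (pow_le_pow_right_of_le_one' h (Nat.zero_le _)).trans_eq (pow_zero _)

/-- the product `∏ p ^ g p` over atoms -/
def phi (g : {p : U // IsIntegralAtom p} →₀ ℕ) : U := g.prod fun p n => (p : U) ^ n

lemma phi_le_one (g : {p : U // IsIntegralAtom p} →₀ ℕ) : phi g ≤ 1 := by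
  unfold phi Finsupp.prod
  refine Finset.prod_induction _ (· ≤ 1) (fun x y hx hy => mul_le_one' hx hy) le_rfl
    fun p _ => pow_le_one'' p.2.1 _

lemma phi_add (g h : {p : U // IsIntegralAtom p} →₀ ℕ) : phi (g + h) = phi g * phi h :=
  Finsupp.prod_add_index' (fun _ => pow_zero _) (fun _ m n => pow_add _ m n)

lemma phi_single (q : {p : U // IsIntegralAtom p}) (n : ℕ) :
    phi (Finsupp.single q n) = (q : U) ^ n :=
  Finsupp.prod_single_index (pow_zero _)

lemma sup_mul_le_coprime {a b c : U} (ha : a ≤ 1) (hb : b ≤ 1) (hc : c ≤ 1) :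
    (a ⊔ b) * (a ⊔ c) ≤ a ⊔ b * c := by
  rw [sup_mul, mul_sup, mul_sup]
  refine sup_le (sup_le ?_ ?_) (sup_le ?_ le_sup_right)
  · exact le_sup_of_le_left (mul_le_of_le_one_right' ha)
  · exact le_sup_of_le_left (mul_le_of_le_one_right' hc)
  · exact le_sup_of_le_left (mul_le_of_le_one_left' hb)

lemma coprime_mul {a b c : U} (ha : a ≤ 1) (hb : b ≤ 1) (hc : c ≤ 1)
    (h1 : a ⊔ b = 1) (h2 : a ⊔ c = 1) : a ⊔ b * c = 1 := by
  have := sup_mul_le_coprime ha hb hc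
  rw [h1, h2, mul_one] at this
  exact le_antisymm (sup_le ha (mul_le_one' hb hc)) this

lemma coprime_pow {a b : U} (ha : a ≤ 1) (hb : b ≤ 1) (h : a ⊔ b = 1) (n : ℕ) :
    a ⊔ b ^ n = 1 := by
  induction n with
  | zero => simpa using ha
  | succ n ih =>
    rw [pow_succ]
    exact coprime_mul ha (pow_le_one'' hb _) hb ih h

lemma coprime_phi {q : {p : U // IsIntegralAtom p}} {g : {p : U // IsIntegralAtom p} →₀ ℕ}
    (hgq : g q = 0) : (q : U) ⊔ phi g = 1 := by
  unfold phi Finsupp.prod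
  refine (Finset.prod_induction _ (fun x => x ≤ 1 ∧ (q : U) ⊔ x = 1)
    (fun x y hx hy => ⟨mul_le_one' hx.1 hy.1, coprime_mul q.2.1 hx.1 hy.1 hx.2 hy.2⟩)
    ⟨le_rfl, by simpa using q.2.1⟩ (fun p hp => ?_)).2
  have hpq : p ≠ q := fun h => by
    rw [h] at hp; exact Finsupp.notMem_support_iff.2 hgq hp
  have hsup : (q : U) ⊔ (p : U) = 1 :=
    atoms_sup_eq_one q.2 p.2 (fun h => hpq (Subtype.ext h.symm))
  exact ⟨pow_le_one'' p.2.1 _, coprime_pow q.2.1 p.2.1 hsup _⟩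

lemma phi_le_atom {q : {p : U // IsIntegralAtom p}} {g : {p : U // IsIntegralAtom p} →₀ ℕ}
    (hq : q ∈ g.support) : phi g ≤ (q : U) := by
  have h1 : phi g = (q : U) ^ g q * (g.erase q).prod fun p n => (p : U) ^ n :=
    (Finsupp.mul_prod_erase g q (fun p n => (p : U) ^ n) hq).symm
  have h2 : (g.erase q).prod (fun p n => (p : U) ^ n) ≤ 1 := phi_le_one (g.erase q)
  calc phi g ≤ (q : U) ^ g q := by
        rw [h1]; exact mul_le_of_le_one_right' h2
    _ ≤ (q : U) ^ 1 := pow_le_pow_right_of_le_one' q.2.1 (Finsupp.mem_support_iff.1 hq |> Nat.one_le_iff_ne_zero.2)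
    _ = (q : U) := pow_one _

lemma atom_mem_of_le {q : {p : U // IsIntegralAtom p}} {g : {p : U // IsIntegralAtom p} →₀ ℕ}
    (h : phi g ≤ (q : U)) : g q ≠ 0 := by
  intro hgq
  have h1 : (q : U) ⊔ phi g = 1 := coprime_phi hgq
  rw [sup_eq_left.2 h] at h1
  exact q.2.2.1 h1

lemma phi_eq_one {g : {p : U // IsIntegralAtom p} →₀ ℕ} (h : phi g = 1) : g = 0 := by
  by_contra hg
  obtain ⟨q, hq⟩ := Finsupp.support_nonempty_iff.2 hg
  have := phi_le_atom hq
  rw [h] at this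
  exact q.2.2.1 (le_antisymm q.2.1 this)

lemma sub_single_add {g : {p : U // IsIntegralAtom p} →₀ ℕ}
    {q : {p : U // IsIntegralAtom p}} (h : g q ≠ 0) :
    (g - Finsupp.single q 1) + Finsupp.single q 1 = g := by
  ext p
  rcases eq_or_ne q p with rfl | hpq
  · rw [Finsupp.add_apply, Finsupp.tsub_apply, Finsupp.single_eq_same]
    omega
  · rw [Finsupp.add_apply, Finsupp.tsub_apply, Finsupp.single_eq_of_ne hpq.symm]
    omega

lemma phi_inj : ∀ n (g h : {p : U // IsIntegralAtom p} →₀ ℕ),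
    (g.sum fun _ k => k) = n → phi g = phi h → g = h := by
  intro n
  induction n using Nat.strong_induction_on with
  | _ n ih =>
    intro g h hdeg heq
    rcases eq_or_ne g 0 with rfl | hg
    · have : phi h = 1 := by rw [← heq]; simp [phi]
      exact (phi_eq_one this).symm
    obtain ⟨q, hq⟩ := Finsupp.support_nonempty_iff.2 hg
    have hgq : g q ≠ 0 := Finsupp.mem_support_iff.1 hq
    have hhq : h q ≠ 0 := atom_mem_of_le (heq ▸ phi_le_atom hq)
    set g' := g - Finsupp.single q 1 with hg'
    set h' := h - Finsupp.single q 1 with hh'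
    have hgdec : g' + Finsupp.single q 1 = g := sub_single_add hgq
    have hhdec : h' + Finsupp.single q 1 = h := sub_single_add hhq
    have heq' : phi g' = phi h' := by
      have e1 : phi g' * (q : U) = phi g := by
        rw [← hgdec, phi_add, phi_single, pow_one]
      have e2 : phi h' * (q : U) = phi h := by
        rw [← hhdec, phi_add, phi_single, pow_one]
      have := e1.trans (heq.trans e2.symm)
      exact mul_right_cancel this
    have hdeg' : (g'.sum fun _ k => k) + 1 = n := by
      rw [← hdeg, ← hgdec, Finsupp.sum_add_index' (fun _ => rfl) (fun _ _ _ => rfl)]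
      simp
    have := ih (g'.sum fun _ k => k) (by omega) g' h' rfl heq'
    rw [← hgdec, ← hhdec, this]

lemma list_prod_phi
    (hacc : ∀ f : ℕ → U, (∀ n, f n ≤ 1) → Monotone f → ∃ N, ∀ n, N ≤ n → f n = f N) :
    ∀ l : List U, (∀ p ∈ l, IsIntegralAtom p) → ∃ g, l.prod = phi g := by
  intro l
  induction l with
  | nil => exact fun _ => ⟨0, by simp [phi]⟩
  | cons p l ihl =>
    intro hl
    obtain ⟨g, hg⟩ := ihl fun q hq => hl q (List.mem_cons_of_mem _ hq)
    have hp := hl p List.mem_cons_self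
    refine ⟨g + Finsupp.single ⟨p, hp⟩ 1, ?_⟩
    rw [phi_add, phi_single, pow_one, List.prod_cons, hg, mul_comm]

lemma exists_phi
    (hacc : ∀ f : ℕ → U, (∀ n, f n ≤ 1) → Monotone f → ∃ N, ∀ n, N ≤ n → f n = f N)
    {a : U} (ha : a ≤ 1) : ∃ g, a = phi g := by
  obtain ⟨l, hl, rfl⟩ := exists_list_factorization hacc ha
  obtain ⟨g, hg⟩ := list_prod_phi hacc l hl
  exact ⟨g, hg⟩

/-- the evaluation hom from the free abelian group on the atoms -/
def psi : Multiplicative ({p : U // IsIntegralAtom p} →₀ ℤ) →* U where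
  toFun f := (Multiplicative.toAdd f).prod fun p n => (p : U) ^ n
  map_one' := Finsupp.prod_zero_index
  map_mul' f g :=
    Finsupp.prod_add_index' (fun _ => zpow_zero _) (fun _ m n => zpow_add _ m n)

lemma psi_single (p : {p : U // IsIntegralAtom p}) (n : ℤ) :
    psi (Multiplicative.ofAdd (Finsupp.single p n)) = (p : U) ^ n :=
  Finsupp.prod_single_index (zpow_zero _)

lemma psi_nat (g : {p : U // IsIntegralAtom p} →₀ ℕ) :
    psi (Multiplicative.ofAdd (g.mapRange (Nat.cast : ℕ → ℤ) Nat.cast_zero)) = phi g := by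
  show (g.mapRange (Nat.cast : ℕ → ℤ) Nat.cast_zero).prod (fun p n => (p : U) ^ n) = phi g
  rw [Finsupp.prod_mapRange_index (fun _ => zpow_zero _)]
  exact Finsupp.prod_congr fun p _ => zpow_natCast _ _

lemma psi_injective : Function.Injective (psi (U := U)) := by
  refine (injective_iff_map_eq_one psi).2 fun x hx => ?_
  set f := Multiplicative.toAdd x with hf
  set g := f.mapRange Int.toNat Int.toNat_zero with hg
  set h := (-f).mapRange Int.toNat Int.toNat_zero with hh
  have key : g.mapRange (Nat.cast : ℕ → ℤ) Nat.cast_zero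
      = f + h.mapRange (Nat.cast : ℕ → ℤ) Nat.cast_zero := by
    ext p
    simp only [hg, hh, Finsupp.mapRange_apply, Finsupp.coe_add, Pi.add_apply, Finsupp.neg_apply]
    omega
  have : phi g = phi h := by
    rw [← psi_nat, ← psi_nat, key]
    have : Multiplicative.ofAdd (f + h.mapRange (Nat.cast : ℕ → ℤ) Nat.cast_zero)
        = x * Multiplicative.ofAdd (h.mapRange (Nat.cast : ℕ → ℤ) Nat.cast_zero) := rfl
    rw [this, map_mul, hx, one_mul]
  have hgh := phi_inj (g.sum fun _ k => k) g h rfl this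
  have hf0 : f = 0 := by
    ext p
    have := congrArg (fun t => t p) hgh
    simp only [hg, hh, Finsupp.mapRange_apply, Finsupp.neg_apply] at this
    simp only [Finsupp.coe_zero, Pi.zero_apply]
    omega
  calc x = Multiplicative.ofAdd f := rfl
    _ = 1 := by rw [hf0]; rfl

lemma psi_surjective
    (hacc : ∀ f : ℕ → U, (∀ n, f n ≤ 1) → Monotone f → ∃ N, ∀ n, N ≤ n → f n = f N) :
    Function.Surjective (psi (U := U)) := by
  intro a
  obtain ⟨g, hg⟩ := exists_phi hacc (inf_le_right : a ⊓ 1 ≤ 1)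
  obtain ⟨h, hh⟩ := exists_phi hacc (inf_le_right : a⁻¹ ⊓ 1 ≤ 1)
  refine ⟨Multiplicative.ofAdd (g.mapRange (Nat.cast : ℕ → ℤ) Nat.cast_zero
    - h.mapRange (Nat.cast : ℕ → ℤ) Nat.cast_zero), ?_⟩
  rw [ofAdd_sub, map_div, psi_nat, psi_nat, ← hg, ← hh, div_eq_mul_inv,
    ← pos_neg_decomp]

theorem comm_main
    (hacc : ∀ f : ℕ → U, (∀ n, f n ≤ 1) → Monotone f → ∃ N, ∀ n, N ≤ n → f n = f N) :
    ∃ e : U ≃* Multiplicative ({p : U // IsIntegralAtom p} →₀ ℤ),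
      (∀ p : {p : U // IsIntegralAtom p},
        e (p : U) = Multiplicative.ofAdd (Finsupp.single p 1)) ∧
      (∀ a : U, a ≤ 1 ↔ ∀ p, 0 ≤ Multiplicative.toAdd (e a) p) := by
  have hbij : Function.Bijective (psi (U := U)) := ⟨psi_injective, psi_surjective hacc⟩
  refine ⟨(MulEquiv.ofBijective psi hbij).symm, fun p => ?_, fun a => ?_⟩
  · rw [MulEquiv.symm_apply_eq, MulEquiv.ofBijective_apply]
    rw [show ((p : U) = psi (Multiplicative.ofAdd (Finsupp.single p 1))) from
      by rw [psi_single, zpow_one]]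
  · constructor
    · intro ha p
      obtain ⟨g, rfl⟩ := exists_phi hacc ha
      have : (MulEquiv.ofBijective psi hbij).symm (phi g)
          = Multiplicative.ofAdd (g.mapRange (Nat.cast : ℕ → ℤ) Nat.cast_zero) := by
        rw [MulEquiv.symm_apply_eq, MulEquiv.ofBijective_apply, psi_nat]
      rw [this]
      simp only [toAdd_ofAdd, Finsupp.mapRange_apply]
      exact Int.natCast_nonneg _
    · intro hp
      have ha : a = psi ((MulEquiv.ofBijective psi hbij).symm a) := by
        conv_lhs => rw [← MulEquiv.apply_symm_apply (MulEquiv.ofBijective psi hbij) a]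
        rw [MulEquiv.ofBijective_apply]
      rw [ha]
      show (Multiplicative.toAdd ((MulEquiv.ofBijective psi hbij).symm a)).prod
        (fun p n => (p : U) ^ n) ≤ 1
      set f := Multiplicative.toAdd ((MulEquiv.ofBijective psi hbij).symm a)
      unfold Finsupp.prod
      refine Finset.prod_induction _ (· ≤ 1) (fun x y hx hy => mul_le_one' hx hy) le_rfl
        fun p _ => ?_
      show (p : U) ^ f p ≤ 1
      have h0 : 0 ≤ f p := hp p
      have : (p : U) ^ f p = (p : U) ^ (f p).toNat := by
        rw [← zpow_natCast, Int.toNat_of_nonneg h0]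
      rw [this]
      exact pow_le_one'' p.2.1 _

end Comm


/-- A conditionally complete lattice-ordered group satisfying the ACC on integral elements is
commutative, its monoid of integral elements is free abelian on the set of atoms, the whole
group is free abelian on the same basis (expressed by a `MulEquiv` onto the multiplicative
free abelian group `atoms →₀ ℤ` sending atoms to basis elements and integral elements to the
nonnegative part), and for integral `a, b` the join `a ⊔ b` is a gcd and the meet `a ⊓ b` is
an lcm with respect to divisibility in `U₊`. -/
theorem stmt5 {U : Type*} [Lattice U] [Group U]
    [CovariantClass U U (· * ·) (· ≤ ·)]
    [CovariantClass U U (Function.swap (· * ·)) (· ≤ ·)]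
    (hsup : ∀ s : Set U, s.Nonempty → BddAbove s → ∃ u, IsLUB s u)
    (hinf : ∀ s : Set U, s.Nonempty → BddBelow s → ∃ u, IsGLB s u)
    (hacc : ∀ f : ℕ → U, (∀ n, f n ≤ 1) → Monotone f → ∃ N, ∀ n, N ≤ n → f n = f N) :
    (∀ a b : U, a * b = b * a) ∧
    (∃ e : U ≃* Multiplicative ({p : U // IsIntegralAtom p} →₀ ℤ),
      (∀ p : {p : U // IsIntegralAtom p},
        e (p : U) = Multiplicative.ofAdd (Finsupp.single p 1)) ∧
      (∀ a : U, a ≤ 1 ↔ ∀ p, 0 ≤ Multiplicative.toAdd (e a) p)) ∧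
    (∀ a b : U, a ≤ 1 → b ≤ 1 →
      ((∃ c, c ≤ 1 ∧ a = (a ⊔ b) * c) ∧ (∃ c, c ≤ 1 ∧ b = (a ⊔ b) * c) ∧
        (∀ d : U, d ≤ 1 → (∃ c, c ≤ 1 ∧ a = d * c) → (∃ c, c ≤ 1 ∧ b = d * c) →
          ∃ c, c ≤ 1 ∧ (a ⊔ b) = d * c)) ∧
      ((∃ c, c ≤ 1 ∧ (a ⊓ b) = a * c) ∧ (∃ c, c ≤ 1 ∧ (a ⊓ b) = b * c) ∧
        (∀ m : U, m ≤ 1 → (∃ c, c ≤ 1 ∧ m = a * c) → (∃ c, c ≤ 1 ∧ m = b * c) →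
          ∃ c, c ≤ 1 ∧ m = (a ⊓ b) * c))) := by
  have hcomm : ∀ a b : U, a * b = b * a := mul_comm_all hacc
  refine ⟨hcomm, ?_, ?_⟩
  · letI : CommGroup U := { (inferInstance : Group U) with mul_comm := hcomm }
    exact comm_main hacc
  · intro a b ha hb
    refine ⟨⟨dvd_int le_sup_left, dvd_int le_sup_right, fun d hd h1 h2 => ?_⟩,
      dvd_int inf_le_left, dvd_int inf_le_right, fun m hm h1 h2 => ?_⟩
    · obtain ⟨c1, hc1, he1⟩ := h1
      obtain ⟨c2, hc2, he2⟩ := h2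
      exact dvd_int (sup_le (int_of_dvd hc1 he1) (int_of_dvd hc2 he2))
    · obtain ⟨c1, hc1, he1⟩ := h1
      obtain ⟨c2, hc2, he2⟩ := h2
      exact dvd_int (le_inf (int_of_dvd hc1 he1) (int_of_dvd hc2 he2))
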